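/- For every n ≥ 1 there exists a nonnegative function f_n ∈ L¹(S^d) with ‖f_n‖₁ = 1 such that for every α > 1 and every y ∈ D_{n,α}, the Poisson integral satisfies P[f_n]((1 - 2^{-n})·y) ≥ (C/n)·2^{(n - N_{n,α})d}, where N_{n,α} = ⌊n/α⌋ + 1 and C > 0 depends only on d. -/

import Mathlib

open Metric Set MeasureTheory Filter
open scoped Pointwise ENNReal

/-- The Poisson kernel on the unit ball of `ℝ^{d+1}`. -/
noncomputable def poissonKernelSphere (d : ℕ) (x ξ : EuclideanSpace ℝ (Fin (d + 1))) : ℝ :=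
  (1 - ‖x‖ ^ 2) / ‖x - ξ‖ ^ (d + 1)

/-- The normalized surface measure on the unit sphere of `ℝ^{d+1}`. -/
noncomputable def sphereMeasure (d : ℕ) :
    Measure (sphere (0 : EuclideanSpace ℝ (Fin (d + 1))) 1) :=
  ((volume : Measure (EuclideanSpace ℝ (Fin (d + 1)))).toSphere Set.univ)⁻¹ •
    (volume : Measure (EuclideanSpace ℝ (Fin (d + 1)))).toSphere

variable {d : ℕ}

/-- caps as subsets of the sphere -/
def sphCap (d : ℕ) (x : EuclideanSpace ℝ (Fin (d + 1))) (δ : ℝ) :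
    Set (sphere (0 : EuclideanSpace ℝ (Fin (d + 1))) 1) :=
  {ξ | ‖(ξ : EuclideanSpace ℝ (Fin (d + 1))) - x‖ < δ}

lemma measurableSet_sphCap (x : EuclideanSpace ℝ (Fin (d + 1))) (δ : ℝ) :
    MeasurableSet (sphCap d x δ) := by
  have : sphCap d x δ = (fun ξ : sphere (0 : EuclideanSpace ℝ (Fin (d + 1))) 1 =>
      ‖(ξ : EuclideanSpace ℝ (Fin (d + 1))) - x‖) ⁻¹' (Iio δ) := rfl
  rw [this]
  exact ((continuous_subtype_val.sub continuous_const).norm).measurable measurableSet_Iio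

lemma ball_subset_cone (x : EuclideanSpace ℝ (Fin (d + 1))) (hx : ‖x‖ = 1)
    {δ c : ℝ} (hδ0 : 0 < δ) (hδ : δ ≤ 1/2) (hc : 1/2 ≤ c) (hc' : c ≤ 1 - δ/8) :
    ball (c • x) (δ/8) ⊆
      Ioo (0:ℝ) 1 • (Subtype.val '' (sphCap d x δ)) := by
  intro z hz
  rw [mem_ball, dist_eq_norm] at hz
  have hz0 : (7:ℝ)/16 < ‖z‖ := by
    have h1 : ‖c • x‖ - ‖z‖ ≤ ‖z - c • x‖ := by
      rw [norm_sub_rev]; exact norm_sub_norm_le _ _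
    have h2 : ‖c • x‖ = c := by
      rw [norm_smul, hx, mul_one, Real.norm_eq_abs, abs_of_nonneg (by linarith)]
    nlinarith
  have hz1 : ‖z‖ < 1 := by
    have h1 : ‖z‖ - ‖c • x‖ ≤ ‖z - c • x‖ := norm_sub_norm_le _ _
    have h2 : ‖c • x‖ = c := by
      rw [norm_smul, hx, mul_one, Real.norm_eq_abs, abs_of_nonneg (by linarith)]
    nlinarith
  have hz0' : (0:ℝ) < ‖z‖ := by linarith
  have hξs : ‖(‖z‖⁻¹ • z)‖ = 1 := by
    rw [norm_smul, norm_inv, norm_norm, inv_mul_cancel₀ hz0'.ne']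
  have hmem : ‖z‖⁻¹ • z ∈ sphere (0 : EuclideanSpace ℝ (Fin (d + 1))) 1 := by
    simp [mem_sphere, dist_eq_norm, hξs]
  refine ⟨‖z‖, ⟨hz0', hz1⟩, ‖z‖⁻¹ • z, ⟨(⟨‖z‖⁻¹ • z, hmem⟩ :
      sphere (0 : EuclideanSpace ℝ (Fin (d + 1))) 1), ?_, rfl⟩, ?_⟩
  · -- cap membership
    show ‖‖z‖⁻¹ • z - x‖ < δ
    have hcz : |c - ‖z‖| < δ/8 := by
      rw [abs_sub_lt_iff]
      have h1 : ‖z‖ - ‖c • x‖ ≤ ‖z - c • x‖ := norm_sub_norm_le _ _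
      have h1' : ‖c • x‖ - ‖z‖ ≤ ‖z - c • x‖ := by
        rw [norm_sub_rev]; exact norm_sub_norm_le _ _
      have h2 : ‖c • x‖ = c := by
        rw [norm_smul, hx, mul_one, Real.norm_eq_abs, abs_of_nonneg (by linarith)]
      constructor <;> nlinarith
    have key : ‖z - ‖z‖ • x‖ < δ/4 := by
      have : z - ‖z‖ • x = (z - c • x) + (c - ‖z‖) • x := by
        rw [sub_smul]; abel
      rw [this]
      calc ‖(z - c • x) + (c - ‖z‖) • x‖ ≤ ‖z - c • x‖ + ‖(c - ‖z‖) • x‖ := norm_add_le _ _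
        _ < δ/8 + δ/8 := by
            apply add_lt_add hz
            rw [norm_smul, hx, mul_one, Real.norm_eq_abs]; exact hcz
        _ = δ/4 := by ring
    have heq : ‖z‖⁻¹ • z - x = ‖z‖⁻¹ • (z - ‖z‖ • x) := by
      rw [smul_sub, smul_smul, inv_mul_cancel₀ hz0'.ne', one_smul]
    rw [heq, norm_smul, norm_inv, norm_norm]
    have hinv : ‖z‖⁻¹ < (7/16)⁻¹ := by
      exact inv_strictAnti₀ (by norm_num) hz0
    calc ‖z‖⁻¹ * ‖z - ‖z‖ • x‖ ≤ (7/16)⁻¹ * ‖z - ‖z‖ • x‖ := by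
          apply mul_le_mul_of_nonneg_right hinv.le (norm_nonneg _)
      _ < (7/16)⁻¹ * (δ/4) := by
          apply mul_lt_mul_of_pos_left key (by norm_num)
      _ ≤ δ := by norm_num; linarith
  · show ‖z‖ • (‖z‖⁻¹ • z) = z
    rw [smul_smul, mul_inv_cancel₀ hz0'.ne', one_smul]

lemma cone_subset_balls (x : EuclideanSpace ℝ (Fin (d + 1))) (hx : ‖x‖ = 1)
    {δ : ℝ} (hδ0 : 0 < δ) {M : ℕ} (hM : 1/δ ≤ M) :
    Ioo (0:ℝ) 1 • (Subtype.val '' (sphCap d x δ)) ⊆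
      ⋃ k ∈ Finset.range M, ball ((k * δ) • x) (2 * δ) := by
  rintro z ⟨r, hr, w, ⟨ξ, hξ, rfl⟩, rfl⟩
  have hξx : ‖(ξ : EuclideanSpace ℝ (Fin (d + 1))) - x‖ < δ := hξ
  set k : ℕ := ⌊r / δ⌋₊ with hk
  have hkM : k < M := by
    apply Nat.floor_lt (div_nonneg hr.1.le hδ0.le) |>.2
    calc r / δ < 1 / δ := by
          exact (div_lt_div_iff_of_pos_right hδ0).2 hr.2
      _ ≤ M := hM
  have hkr : (k : ℝ) * δ ≤ r := by
    have := Nat.floor_le (div_nonneg hr.1.le hδ0.le)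
    calc (k:ℝ) * δ ≤ (r / δ) * δ := mul_le_mul_of_nonneg_right this hδ0.le
      _ = r := div_mul_cancel₀ _ hδ0.ne'
  have hrk : r < ((k : ℝ) + 1) * δ := by
    have := Nat.lt_floor_add_one (r / δ)
    calc r = (r / δ) * δ := (div_mul_cancel₀ _ hδ0.ne').symm
      _ < ((k:ℝ) + 1) * δ := mul_lt_mul_of_pos_right this hδ0
  simp only [Finset.mem_range, mem_iUnion, mem_ball, dist_eq_norm]
  refine ⟨k, hkM, ?_⟩
  have h1 : r • (ξ : EuclideanSpace ℝ (Fin (d + 1))) - (↑k * δ) • x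
      = r • ((ξ : EuclideanSpace ℝ (Fin (d + 1))) - x) + (r - ↑k * δ) • x := by
    rw [smul_sub, sub_smul]; abel
  rw [h1]
  calc ‖r • ((ξ : EuclideanSpace ℝ (Fin (d + 1))) - x) + (r - ↑k * δ) • x‖
      ≤ ‖r • ((ξ : EuclideanSpace ℝ (Fin (d + 1))) - x)‖ + ‖(r - ↑k * δ) • x‖ := norm_add_le _ _
    _ < δ + δ := by
        apply add_lt_add_of_lt_of_le
        · rw [norm_smul, Real.norm_eq_abs, abs_of_pos hr.1]
          calc r * ‖(ξ : EuclideanSpace ℝ (Fin (d + 1))) - x‖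
              ≤ 1 * ‖(ξ : EuclideanSpace ℝ (Fin (d + 1))) - x‖ := by
                apply mul_le_mul_of_nonneg_right hr.2.le (norm_nonneg _)
            _ < δ := by rw [one_mul]; exact hξx
        · rw [norm_smul, hx, mul_one, Real.norm_eq_abs,
            abs_of_nonneg (by linarith)]
          linarith
    _ = 2 * δ := by ring


lemma vol_ball_pos (d : ℕ) :
    0 < (volume : Measure (EuclideanSpace ℝ (Fin (d + 1)))) (ball 0 1) :=
  measure_ball_pos _ _ one_pos

lemma vol_ball_ne_top (d : ℕ) :
    (volume : Measure (EuclideanSpace ℝ (Fin (d + 1)))) (ball 0 1) ≠ ⊤ :=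
  measure_ball_lt_top.ne

lemma toSphere_univ_eq (d : ℕ) :
    (volume : Measure (EuclideanSpace ℝ (Fin (d + 1)))).toSphere Set.univ
      = ((d : ℝ≥0∞) + 1) * volume (ball (0 : EuclideanSpace ℝ (Fin (d + 1))) 1) := by
  rw [Measure.toSphere_apply_univ, finrank_euclideanSpace_fin]
  push_cast
  ring_nf

lemma sphereMeasure_apply {d : ℕ} {s : Set (sphere (0 : EuclideanSpace ℝ (Fin (d + 1))) 1)}
    (hs : MeasurableSet s) :
    sphereMeasure d s =
      (((d : ℝ≥0∞) + 1) * volume (ball (0 : EuclideanSpace ℝ (Fin (d + 1))) 1))⁻¹ *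
        (((d : ℝ≥0∞) + 1) * volume (Ioo (0:ℝ) 1 • (Subtype.val '' s))) := by
  rw [sphereMeasure, Measure.smul_apply, smul_eq_mul, toSphere_univ_eq,
    Measure.toSphere_apply' _ hs, finrank_euclideanSpace_fin]
  congr 2
  push_cast
  ring_nf

lemma sphereMeasure_univ (d : ℕ) : sphereMeasure d Set.univ = 1 := by
  rw [sphereMeasure, Measure.smul_apply, smul_eq_mul]
  apply ENNReal.inv_mul_cancel
  · rw [toSphere_univ_eq]
    exact (ENNReal.mul_pos (by simp) (vol_ball_pos d).ne').ne'
  · rw [toSphere_univ_eq]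
    exact ENNReal.mul_ne_top (by simp) (vol_ball_ne_top d)

instance (d : ℕ) : IsProbabilityMeasure (sphereMeasure d) := ⟨sphereMeasure_univ d⟩

lemma sphereMeasure_cap_lower (d : ℕ)
    (x : sphere (0 : EuclideanSpace ℝ (Fin (d + 1))) 1) {δ : ℝ}
    (hδ0 : 0 < δ) (hδ : δ ≤ 1/2) {m : ℕ} (hm : (m : ℝ) * (δ/4) ≤ 3/8) :
    (m : ℝ≥0∞) * ENNReal.ofReal ((δ/8)^(d+1)) ≤ sphereMeasure d (sphCap d (x : EuclideanSpace ℝ (Fin (d + 1))) δ) := by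
  set E := EuclideanSpace ℝ (Fin (d + 1))
  set v : ℝ≥0∞ := volume (ball (0 : E) 1) with hv
  have hx : ‖(x : E)‖ = 1 := by
    have := x.2
    simpa [mem_sphere, dist_eq_norm] using this
  -- the disjoint balls
  set B : ℕ → Set E := fun k => ball ((1/2 + k * (δ/4)) • (x : E)) (δ/8) with hB
  have hsub : ∀ k ∈ Finset.range m, B k ⊆
      Ioo (0:ℝ) 1 • (Subtype.val '' (sphCap d (x : E) δ)) := by
    intro k hk
    rw [Finset.mem_range] at hk
    apply ball_subset_cone _ hx hδ0 hδ
    · nlinarith [Nat.cast_nonneg (α := ℝ) k, hδ0.le]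
    · have hkm : (k : ℝ) ≤ (m : ℝ) - 1 := by
        have : (k : ℝ) + 1 ≤ m := by exact_mod_cast hk
        linarith
      nlinarith [hδ0.le]
  have hdisj : Set.Pairwise ↑(Finset.range m) (Function.onFun Disjoint fun k => B k) := by
    intro j _ k _ hjk
    apply ball_disjoint_ball
    rw [dist_eq_norm, ← sub_smul, norm_smul, hx, mul_one, Real.norm_eq_abs]
    have h1 : (1:ℝ) ≤ |(j:ℝ) - (k:ℝ)| := by
      have hne : ((j:ℤ) - (k:ℤ)) ≠ 0 := sub_ne_zero.2 (by exact_mod_cast hjk)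
      have h2 := Int.one_le_abs hne
      calc (1:ℝ) ≤ ((|(j:ℤ) - (k:ℤ)| : ℤ) : ℝ) := by exact_mod_cast h2
        _ = |(j:ℝ) - (k:ℝ)| := by push_cast; ring
    rw [show (1/2 + (j:ℝ) * (δ/4)) - (1/2 + (k:ℝ) * (δ/4)) = ((j:ℝ) - k) * (δ/4) from by ring,
      abs_mul, abs_of_pos (by linarith : (0:ℝ) < δ/4)]
    nlinarith
  have hmeas : ∀ k ∈ Finset.range m, MeasurableSet (B k) := fun k _ => measurableSet_ball
  have hunion : volume (⋃ k ∈ Finset.range m, B k) = (m : ℝ≥0∞) * (ENNReal.ofReal ((δ/8)^(d+1)) * v) := by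
    rw [measure_biUnion_finset hdisj hmeas]
    have hball : ∀ k : ℕ, volume (B k) = ENNReal.ofReal ((δ/8)^(d+1)) * v := by
      intro k
      rw [hB]
      rw [Measure.addHaar_ball _ _ (by linarith : (0:ℝ) ≤ δ/8), finrank_euclideanSpace_fin]
    simp only [hball, Finset.sum_const, Finset.card_range, nsmul_eq_mul]
  calc (m : ℝ≥0∞) * ENNReal.ofReal ((δ/8)^(d+1))
      = (((d : ℝ≥0∞) + 1) * v)⁻¹ * (((d : ℝ≥0∞) + 1) * ((m : ℝ≥0∞) * (ENNReal.ofReal ((δ/8)^(d+1)) * v))) := by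
        rw [show (((d : ℝ≥0∞) + 1) * v)⁻¹ * (((d : ℝ≥0∞) + 1) * ((m : ℝ≥0∞) * (ENNReal.ofReal ((δ/8)^(d+1)) * v)))
            = ((m : ℝ≥0∞) * ENNReal.ofReal ((δ/8)^(d+1))) * ((((d : ℝ≥0∞) + 1) * v)⁻¹ * (((d : ℝ≥0∞) + 1) * v)) from by ring,
          ENNReal.inv_mul_cancel (ENNReal.mul_pos (by simp) (vol_ball_pos d).ne').ne'
            (ENNReal.mul_ne_top (by simp) (vol_ball_ne_top d)), mul_one]
    _ ≤ sphereMeasure d (sphCap d (x : E) δ) := by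
        rw [sphereMeasure_apply (measurableSet_sphCap _ _)]
        apply mul_le_mul_right
        apply mul_le_mul_right
        rw [← hunion]
        exact measure_mono (Set.iUnion₂_subset hsub)

lemma sphereMeasure_cap_upper (d : ℕ)
    (x : sphere (0 : EuclideanSpace ℝ (Fin (d + 1))) 1) {δ : ℝ}
    (hδ0 : 0 < δ) {M : ℕ} (hM : 1/δ ≤ M) :
    sphereMeasure d (sphCap d (x : EuclideanSpace ℝ (Fin (d + 1))) δ) ≤
      (M : ℝ≥0∞) * ENNReal.ofReal ((2*δ)^(d+1)) := by
  set E := EuclideanSpace ℝ (Fin (d + 1))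
  set v : ℝ≥0∞ := volume (ball (0 : E) 1) with hv
  have hx : ‖(x : E)‖ = 1 := by
    have := x.2
    simpa [mem_sphere, dist_eq_norm] using this
  have hcone : volume (Ioo (0:ℝ) 1 • (Subtype.val '' (sphCap d (x : E) δ)))
      ≤ (M : ℝ≥0∞) * (ENNReal.ofReal ((2*δ)^(d+1)) * v) := by
    calc volume (Ioo (0:ℝ) 1 • (Subtype.val '' (sphCap d (x : E) δ)))
        ≤ volume (⋃ k ∈ Finset.range M, ball (((k:ℝ) * δ) • (x : E)) (2*δ)) :=
          measure_mono (cone_subset_balls _ hx hδ0 hM)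
      _ ≤ ∑ k ∈ Finset.range M, volume (ball (((k:ℝ) * δ) • (x : E)) (2*δ)) :=
          measure_biUnion_finset_le _ _
      _ = (M : ℝ≥0∞) * (ENNReal.ofReal ((2*δ)^(d+1)) * v) := by
          have hball : ∀ k : ℕ, volume (ball (((k:ℝ) * δ) • (x : E)) (2*δ))
              = ENNReal.ofReal ((2*δ)^(d+1)) * v := by
            intro k
            rw [Measure.addHaar_ball _ _ (by linarith : (0:ℝ) ≤ 2*δ), finrank_euclideanSpace_fin]
          simp only [hball, Finset.sum_const, Finset.card_range, nsmul_eq_mul]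
  rw [sphereMeasure_apply (measurableSet_sphCap _ _)]
  calc (((d : ℝ≥0∞) + 1) * v)⁻¹ * (((d : ℝ≥0∞) + 1) * volume (Ioo (0:ℝ) 1 • (Subtype.val '' (sphCap d (x : E) δ))))
      ≤ (((d : ℝ≥0∞) + 1) * v)⁻¹ * (((d : ℝ≥0∞) + 1) * ((M : ℝ≥0∞) * (ENNReal.ofReal ((2*δ)^(d+1)) * v))) := by
        exact mul_le_mul_right (mul_le_mul_right hcone _) _
    _ = (M : ℝ≥0∞) * ENNReal.ofReal ((2*δ)^(d+1)) := by
        rw [show (((d : ℝ≥0∞) + 1) * v)⁻¹ * (((d : ℝ≥0∞) + 1) * ((M : ℝ≥0∞) * (ENNReal.ofReal ((2*δ)^(d+1)) * v)))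
            = ((M : ℝ≥0∞) * ENNReal.ofReal ((2*δ)^(d+1))) * ((((d : ℝ≥0∞) + 1) * v)⁻¹ * (((d : ℝ≥0∞) + 1) * v)) from by ring,
          ENNReal.inv_mul_cancel (ENNReal.mul_pos (by simp) (vol_ball_pos d).ne').ne'
            (ENNReal.mul_ne_top (by simp) (vol_ball_ne_top d)), mul_one]

lemma cap_toReal_lower (d : ℕ)
    (x : sphere (0 : EuclideanSpace ℝ (Fin (d + 1))) 1) {δ : ℝ}
    (hδ0 : 0 < δ) (hδ : δ ≤ 1/2) {m : ℕ} (hm : (m : ℝ) * (δ/4) ≤ 3/8) :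
    (m : ℝ) * (δ/8)^(d+1) ≤
      (sphereMeasure d (sphCap d (x : EuclideanSpace ℝ (Fin (d + 1))) δ)).toReal := by
  have h := sphereMeasure_cap_lower d x hδ0 hδ hm
  have h2 := ENNReal.toReal_mono (measure_ne_top _ _) h
  calc (m : ℝ) * (δ/8)^(d+1)
      = ((m : ℝ≥0∞) * ENNReal.ofReal ((δ/8)^(d+1))).toReal := by
        rw [ENNReal.toReal_mul, ENNReal.toReal_natCast,
          ENNReal.toReal_ofReal (by positivity)]
    _ ≤ _ := h2

lemma cap_toReal_upper (d : ℕ)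
    (x : sphere (0 : EuclideanSpace ℝ (Fin (d + 1))) 1) {δ : ℝ}
    (hδ0 : 0 < δ) {M : ℕ} (hM : 1/δ ≤ M) :
    (sphereMeasure d (sphCap d (x : EuclideanSpace ℝ (Fin (d + 1))) δ)).toReal ≤
      (M : ℝ) * (2*δ)^(d+1) := by
  have h := sphereMeasure_cap_upper d x hδ0 hM
  have h2 := ENNReal.toReal_mono
    (ENNReal.mul_ne_top (ENNReal.natCast_ne_top M) ENNReal.ofReal_ne_top) h
  calc (sphereMeasure d (sphCap d (x : EuclideanSpace ℝ (Fin (d + 1))) δ)).toReal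
      ≤ ((M : ℝ≥0∞) * ENNReal.ofReal ((2*δ)^(d+1))).toReal := h2
    _ = (M : ℝ) * (2*δ)^(d+1) := by
        rw [ENNReal.toReal_mul, ENNReal.toReal_natCast,
          ENNReal.toReal_ofReal (by positivity)]

set_option maxHeartbeats 1000000 in
theorem exists_saturating_function (d : ℕ) (C₁ : ℝ)
    (R : ℕ → Finset (sphere (0 : EuclideanSpace ℝ (Fin (d + 1))) 1))
    (hnest : ∀ N : ℕ, R N ⊆ R (N + 1))
    (hcover : ∀ N : ℕ, ∀ ξ : sphere (0 : EuclideanSpace ℝ (Fin (d + 1))) 1,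
      ∃ x ∈ R N, ‖(ξ : EuclideanSpace ℝ (Fin (d + 1))) - x‖ < 2 ^ (-(N : ℝ)))
    (hsep : ∀ N : ℕ, ∀ x ∈ R N, ∀ y ∈ R N, x ≠ y →
      2 ^ (-(N : ℝ)) ≤ ‖(x : EuclideanSpace ℝ (Fin (d + 1))) - y‖)
    (hcard : ∀ N : ℕ, ((R N).card : ℝ) ≤ C₁ * 2 ^ (N * d)) :
    ∃ C : ℝ, 0 < C ∧
      ∀ n : ℕ, 1 ≤ n →
        ∃ f : sphere (0 : EuclideanSpace ℝ (Fin (d + 1))) 1 → ℝ,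
          Integrable f (sphereMeasure d) ∧ (∀ ξ, 0 ≤ f ξ) ∧
          (∫ ξ, f ξ ∂(sphereMeasure d)) = 1 ∧
          ∀ α : ℝ, 1 < α →
            ∀ y : sphere (0 : EuclideanSpace ℝ (Fin (d + 1))) 1,
              (∃ x ∈ R (⌊(n : ℝ) / α⌋₊ + 1),
                ‖(y : EuclideanSpace ℝ (Fin (d + 1))) - x‖ < 2 ^ (-(n : ℝ))) →
              (C / n) * (2:ℝ) ^ (((n : ℝ) - (⌊(n : ℝ) / α⌋₊ + 1)) * d) ≤
                ∫ ξ, poissonKernelSphere d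
                      ((1 - (2:ℝ) ^ (-(n : ℝ))) • (y : EuclideanSpace ℝ (Fin (d + 1)))) ξ * f ξ
                    ∂(sphereMeasure d) := by
  classical
  have hsph : (EuclideanSpace.single (0 : Fin (d+1)) (1:ℝ)) ∈
      sphere (0 : EuclideanSpace ℝ (Fin (d + 1))) 1 := by
    simp [mem_sphere, dist_eq_norm, EuclideanSpace.norm_single]
  set ξ₀ : sphere (0 : EuclideanSpace ℝ (Fin (d + 1))) 1 := ⟨_, hsph⟩ with hξ₀
  have hC₁ : 1 ≤ C₁ := by
    obtain ⟨x0, hx0, -⟩ := hcover 0 ξ₀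
    have h1 : (1:ℝ) ≤ (R 0).card := by exact_mod_cast Finset.card_pos.2 ⟨x0, hx0⟩
    have h2 := hcard 0
    simpa using h1.trans h2
  have hC₁0 : 0 < C₁ := by linarith
  refine ⟨((2:ℝ) * 48^(d+1) * C₁)⁻¹, by positivity, ?_⟩
  intro n hn
  obtain ⟨n', rfl⟩ : ∃ n', n = n' + 1 := ⟨n - 1, by omega⟩
  set μ := sphereMeasure d with hμdef
  set δ : ℝ := (2:ℝ) ^ (-((n' + 1 : ℕ) : ℝ)) with hδdef
  have ht0 : (0:ℝ) < 2 ^ (n' + 1) := by positivity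
  have hδeq : δ = ((2:ℝ) ^ (n' + 1))⁻¹ := by
    rw [hδdef, Real.rpow_neg (by norm_num), Real.rpow_natCast]
  have hδ0 : 0 < δ := by rw [hδeq]; positivity
  have hδhalf : δ ≤ 1/2 := by
    rw [hδeq, one_div]
    apply inv_anti₀ (by norm_num)
    calc (2:ℝ) = 2^1 := (pow_one 2).symm
      _ ≤ 2^(n'+1) := by
          apply pow_le_pow_right₀ (by norm_num)
          omega
  -- the sets and their measures
  set U : ℕ → Set (sphere (0 : EuclideanSpace ℝ (Fin (d+1))) 1) :=
    fun N => ⋃ x ∈ R N, sphCap d (x : EuclideanSpace ℝ (Fin (d+1))) δ with hUdef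
  have hUmeas : ∀ N, MeasurableSet (U N) :=
    fun N => (R N).measurableSet_biUnion (fun x _ => measurableSet_sphCap _ _)
  set m : ℕ → ℝ := fun N => (μ (U N)).toReal with hmdef
  -- lower bound for each cap
  have hm248 : (((2:ℕ)^n' : ℕ) : ℝ) * (δ/4) ≤ 3/8 := by
    push_cast
    rw [hδeq, pow_succ']
    have h2n : ((2:ℝ)^n') ≠ 0 := by positivity
    rw [mul_inv, div_eq_mul_inv, ← mul_assoc]
    rw [show (2:ℝ)^n' * ((2:ℝ)⁻¹ * ((2:ℝ)^n')⁻¹) = (2:ℝ)⁻¹ * ((2:ℝ)^n' * ((2:ℝ)^n')⁻¹) from by ring,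
      mul_inv_cancel₀ h2n]
    norm_num
  have hcaplow : ∀ x : sphere (0 : EuclideanSpace ℝ (Fin (d+1))) 1,
      (2:ℝ)^n' * (δ/8)^(d+1) ≤ (μ (sphCap d (x : EuclideanSpace ℝ (Fin (d+1))) δ)).toReal := by
    intro x
    have h := cap_toReal_lower d x hδ0 hδhalf hm248
    push_cast at h
    exact h
  have hcapup : ∀ x : sphere (0 : EuclideanSpace ℝ (Fin (d+1))) 1,
      (μ (sphCap d (x : EuclideanSpace ℝ (Fin (d+1))) δ)).toReal ≤ (2:ℝ)^(n'+1) * (2*δ)^(d+1) := by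
    intro x
    have hM : 1/δ ≤ (((2:ℕ)^(n'+1) : ℕ) : ℝ) := by
      push_cast
      rw [hδeq, one_div, inv_inv]
    have h := cap_toReal_upper d x hδ0 hM
    push_cast at h
    exact h
  -- bounds for m N
  have hmlb : ∀ N, (2:ℝ)^n' * (δ/8)^(d+1) ≤ m N := by
    intro N
    obtain ⟨x0, hx0, -⟩ := hcover N ξ₀
    have hsub : sphCap d (x0 : EuclideanSpace ℝ (Fin (d+1))) δ ⊆ U N :=
      Set.subset_biUnion_of_mem (u := fun x : sphere (0 : EuclideanSpace ℝ (Fin (d+1))) 1 =>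
        sphCap d (x : EuclideanSpace ℝ (Fin (d+1))) δ) hx0
    exact (hcaplow x0).trans (ENNReal.toReal_mono (measure_ne_top _ _) (measure_mono hsub))
  have hm0 : ∀ N, 0 < m N := by
    intro N
    have h1 : (0:ℝ) < (2:ℝ)^n' * (δ/8)^(d+1) := by positivity
    linarith [hmlb N]
  have hmub : ∀ N, m N ≤ C₁ * 2^(N*d) * ((2:ℝ)^(n'+1) * (2*δ)^(d+1)) := by
    intro N
    have h1 : μ (U N) ≤ ∑ x ∈ R N, μ (sphCap d (x : EuclideanSpace ℝ (Fin (d+1))) δ) :=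
      measure_biUnion_finset_le _ _
    have hfin : (∑ x ∈ R N, μ (sphCap d (x : EuclideanSpace ℝ (Fin (d+1))) δ)) ≠ ⊤ :=
      (ENNReal.sum_lt_top.2 fun x _ => measure_lt_top _ _).ne
    have h2 := ENNReal.toReal_mono hfin h1
    rw [ENNReal.toReal_sum (fun x _ => measure_ne_top _ _)] at h2
    have h3 : ∑ x ∈ R N, (μ (sphCap d (x : EuclideanSpace ℝ (Fin (d+1))) δ)).toReal
        ≤ (R N).card • ((2:ℝ)^(n'+1) * (2*δ)^(d+1)) :=
      Finset.sum_le_card_nsmul _ _ _ (fun x _ => hcapup x)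
    rw [nsmul_eq_mul] at h3
    calc m N ≤ ((R N).card : ℝ) * ((2:ℝ)^(n'+1) * (2*δ)^(d+1)) := h2.trans h3
      _ ≤ C₁ * 2^(N*d) * ((2:ℝ)^(n'+1) * (2*δ)^(d+1)) := by
          apply mul_le_mul_of_nonneg_right (hcard N) (by positivity)
  -- the function f
  set f : sphere (0 : EuclideanSpace ℝ (Fin (d+1))) 1 → ℝ :=
    fun ξ => (((n'+1 : ℕ)) : ℝ)⁻¹ * ∑ N ∈ Finset.Icc 1 (n'+1),
      (m N)⁻¹ * (U N).indicator (fun _ => (1:ℝ)) ξ with hfdef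
  have hind : ∀ N, Integrable ((U N).indicator (fun _ => (1:ℝ))) μ :=
    fun N => (integrable_const (1:ℝ)).indicator (hUmeas N)
  have hterm : ∀ N, Integrable (fun ξ => (m N)⁻¹ * (U N).indicator (fun _ => (1:ℝ)) ξ) μ :=
    fun N => (hind N).const_mul _
  have hfint : Integrable f μ :=
    (integrable_finset_sum _ (fun N _ => hterm N)).const_mul _
  have hfnn : ∀ ξ, 0 ≤ f ξ := by
    intro ξ
    apply mul_nonneg (by positivity)
    apply Finset.sum_nonneg
    intro N _
    exact mul_nonneg (inv_nonneg.2 (hm0 N).le)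
      (Set.indicator_nonneg (fun _ _ => zero_le_one) _)
  have hfeq : ∫ ξ, f ξ ∂μ = 1 := by
    simp only [hfdef]
    rw [integral_const_mul, integral_finset_sum _ (fun N _ => hterm N)]
    have hone : ∀ N ∈ Finset.Icc 1 (n'+1),
        ∫ ξ, (m N)⁻¹ * (U N).indicator (fun _ => (1:ℝ)) ξ ∂μ = 1 := by
      intro N _
      rw [integral_const_mul, integral_indicator_const _ (hUmeas N), smul_eq_mul, mul_one]
      exact inv_mul_cancel₀ (hm0 N).ne'
    rw [Finset.sum_congr rfl hone, Finset.sum_const, Nat.card_Icc, nsmul_eq_mul, mul_one]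
    simp only [Nat.add_sub_cancel]
    exact inv_mul_cancel₀ (by positivity)
  refine ⟨f, hfint, hfnn, hfeq, ?_⟩
  intro α hα y hy
  obtain ⟨x, hxR, hyx⟩ := hy
  set N : ℕ := ⌊(((n'+1 : ℕ)) : ℝ) / α⌋₊ + 1 with hNdef
  have hα0 : (0:ℝ) < α := by linarith
  have hNn : N ≤ n' + 1 := by
    have h1 : (((n'+1 : ℕ)) : ℝ) / α < ((n'+1 : ℕ) : ℝ) :=
      div_lt_self (by positivity) hα
    have h2 : ⌊(((n'+1 : ℕ)) : ℝ) / α⌋₊ < n' + 1 :=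
      (Nat.floor_lt (by positivity)).2 (by exact_mod_cast h1)
    omega
  have hNmem : N ∈ Finset.Icc 1 (n'+1) := Finset.mem_Icc.2 ⟨by omega, hNn⟩
  set p : EuclideanSpace ℝ (Fin (d+1)) := (1 - δ) • (y : EuclideanSpace ℝ (Fin (d+1))) with hpdef
  set P : sphere (0 : EuclideanSpace ℝ (Fin (d+1))) 1 → ℝ :=
    fun ξ => poissonKernelSphere d p ξ with hPdef
  have hynorm : ‖(y : EuclideanSpace ℝ (Fin (d+1)))‖ = 1 := by
    simpa [mem_sphere, dist_eq_norm] using y.2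
  have hpnorm : ‖p‖ = 1 - δ := by
    rw [hpdef, norm_smul, hynorm, mul_one, Real.norm_eq_abs, abs_of_pos (by linarith)]
  have hnum : 1 - ‖p‖^2 = δ * (2 - δ) := by rw [hpnorm]; ring
  have hPnn : ∀ ξ : sphere (0 : EuclideanSpace ℝ (Fin (d+1))) 1, 0 ≤ P ξ := by
    intro ξ
    apply div_nonneg _ (by positivity)
    rw [hnum]; nlinarith
  have hPlbd : ∀ ξ : sphere (0 : EuclideanSpace ℝ (Fin (d+1))) 1,
      δ ≤ ‖p - (ξ : EuclideanSpace ℝ (Fin (d+1)))‖ := by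
    intro ξ
    have hξn : ‖(ξ : EuclideanSpace ℝ (Fin (d+1)))‖ = 1 := by
      simpa [mem_sphere, dist_eq_norm] using ξ.2
    have h := norm_sub_norm_le (ξ : EuclideanSpace ℝ (Fin (d+1))) p
    rw [norm_sub_rev] at h
    rw [hξn, hpnorm] at h
    linarith
  have hPub : ∀ ξ : sphere (0 : EuclideanSpace ℝ (Fin (d+1))) 1, P ξ ≤ 1/δ^(d+1) := by
    intro ξ
    have hden : δ^(d+1) ≤ ‖p - (ξ : EuclideanSpace ℝ (Fin (d+1)))‖^(d+1) :=
      pow_le_pow_left₀ hδ0.le (hPlbd ξ) _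
    apply div_le_div₀ zero_le_one _ (by positivity) hden
    rw [hnum]; nlinarith
  have hPmeas : Measurable P := by
    apply Measurable.div measurable_const
    exact ((continuous_const.sub continuous_subtype_val).norm.pow _).measurable
  have hPint : Integrable P μ := by
    apply (integrable_const (1/δ^(d+1))).mono' hPmeas.aestronglyMeasurable
    filter_upwards with ξ
    rw [Real.norm_eq_abs, abs_of_nonneg (hPnn ξ)]
    exact hPub ξ
  have hPbdd : ∃ c, ∀ ξ : sphere (0 : EuclideanSpace ℝ (Fin (d+1))) 1, ‖P ξ‖ ≤ c :=
    ⟨1/δ^(d+1), fun ξ => by rw [Real.norm_eq_abs, abs_of_nonneg (hPnn ξ)]; exact hPub ξ⟩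
  have hPfint : Integrable (fun ξ => P ξ * f ξ) μ :=
    hfint.bdd_mul hPmeas.aestronglyMeasurable (ae_of_all _ hPbdd.choose_spec)
  set g : sphere (0 : EuclideanSpace ℝ (Fin (d+1))) 1 → ℝ :=
    fun ξ => (((n'+1 : ℕ)) : ℝ)⁻¹ * ((m N)⁻¹ * (U N).indicator (fun _ => (1:ℝ)) ξ) with hgdef
  have hgint : Integrable g μ := ((hind N).const_mul _).const_mul _
  have hPgint : Integrable (fun ξ => P ξ * g ξ) μ :=
    hgint.bdd_mul hPmeas.aestronglyMeasurable (ae_of_all _ hPbdd.choose_spec)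
  have hgf : ∀ ξ, g ξ ≤ f ξ := by
    intro ξ
    apply mul_le_mul_of_nonneg_left _ (by positivity)
    exact Finset.single_le_sum (f := fun N => (m N)⁻¹ * (U N).indicator (fun _ => (1:ℝ)) ξ)
      (fun N _ => mul_nonneg (inv_nonneg.2 (hm0 N).le)
        (Set.indicator_nonneg (fun _ _ => zero_le_one) _)) hNmem
  have step1 : ∫ ξ, P ξ * g ξ ∂μ ≤ ∫ ξ, P ξ * f ξ ∂μ := by
    apply integral_mono hPgint hPfint
    intro ξ
    exact mul_le_mul_of_nonneg_left (hgf ξ) (hPnn ξ)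
  have step2 : ∫ ξ, P ξ * g ξ ∂μ
      = (((n'+1 : ℕ)) : ℝ)⁻¹ * ((m N)⁻¹ * ∫ ξ in U N, P ξ ∂μ) := by
    have heq : (fun ξ => P ξ * g ξ)
        = fun ξ => (((n'+1 : ℕ)) : ℝ)⁻¹ * ((m N)⁻¹ * (U N).indicator P ξ) := by
      funext ξ
      by_cases hξ : ξ ∈ U N
      · simp only [hgdef, Set.indicator_of_mem hξ]; ring
      · simp only [hgdef, Set.indicator_of_notMem hξ]; ring
    rw [heq, integral_const_mul, integral_const_mul, integral_indicator (hUmeas N)]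
  have hcapU : sphCap d (x : EuclideanSpace ℝ (Fin (d+1))) δ ⊆ U N :=
    Set.subset_biUnion_of_mem (u := fun x : sphere (0 : EuclideanSpace ℝ (Fin (d+1))) 1 =>
      sphCap d (x : EuclideanSpace ℝ (Fin (d+1))) δ) hxR
  have hPlow : ∀ ξ ∈ sphCap d (x : EuclideanSpace ℝ (Fin (d+1))) δ,
      δ/(3*δ)^(d+1) ≤ P ξ := by
    intro ξ hξ
    have hξx : ‖(ξ : EuclideanSpace ℝ (Fin (d+1))) - x‖ < δ := hξ
    have hpy : ‖p - (y : EuclideanSpace ℝ (Fin (d+1)))‖ = δ := by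
      have hh : p - (y : EuclideanSpace ℝ (Fin (d+1)))
          = (-δ) • (y : EuclideanSpace ℝ (Fin (d+1))) := by
        rw [hpdef, show ((y : EuclideanSpace ℝ (Fin (d+1))) = (1:ℝ) • (y : EuclideanSpace ℝ (Fin (d+1)))) from (one_smul ℝ _).symm]
        rw [smul_smul, ← sub_smul]
        norm_num
      rw [hh, norm_smul, hynorm, mul_one, Real.norm_eq_abs, abs_neg, abs_of_pos hδ0]
    have h3 : ‖p - (ξ : EuclideanSpace ℝ (Fin (d+1)))‖ ≤ 3*δ := by
      have hdecomp : p - (ξ : EuclideanSpace ℝ (Fin (d+1)))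
          = (p - (y : EuclideanSpace ℝ (Fin (d+1)))) + ((y : EuclideanSpace ℝ (Fin (d+1))) - x)
            + (x - (ξ : EuclideanSpace ℝ (Fin (d+1)))) := by abel
      rw [hdecomp]
      have hxξ : ‖x - (ξ : EuclideanSpace ℝ (Fin (d+1)))‖ < δ := by
        rw [norm_sub_rev]; exact hξx
      calc ‖(p - (y : EuclideanSpace ℝ (Fin (d+1)))) + ((y : EuclideanSpace ℝ (Fin (d+1))) - x)
            + (x - (ξ : EuclideanSpace ℝ (Fin (d+1))))‖
          ≤ ‖p - (y : EuclideanSpace ℝ (Fin (d+1)))‖ + ‖(y : EuclideanSpace ℝ (Fin (d+1))) - x‖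
            + ‖x - (ξ : EuclideanSpace ℝ (Fin (d+1)))‖ := norm_add₃_le
        _ ≤ 3*δ := by rw [hpy]; linarith
    simp only [hPdef]
    unfold poissonKernelSphere
    apply div_le_div₀ _ _ (pow_pos (lt_of_lt_of_le hδ0 (hPlbd ξ)) _)
      (pow_le_pow_left₀ (norm_nonneg _) h3 _)
    · rw [hnum]; nlinarith
    · rw [hnum]; nlinarith
  have step34 : (δ/(3*δ)^(d+1)) * ((2:ℝ)^n' * (δ/8)^(d+1)) ≤ ∫ ξ in U N, P ξ ∂μ := by
    calc (δ/(3*δ)^(d+1)) * ((2:ℝ)^n' * (δ/8)^(d+1))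
        ≤ (δ/(3*δ)^(d+1)) * (μ (sphCap d (x : EuclideanSpace ℝ (Fin (d+1))) δ)).toReal := by
          apply mul_le_mul_of_nonneg_left (hcaplow x) (by positivity)
      _ ≤ ∫ ξ in sphCap d (x : EuclideanSpace ℝ (Fin (d+1))) δ, P ξ ∂μ := by
          have h := setIntegral_ge_of_const_le (measurableSet_sphCap _ _) (measure_ne_top _ _)
            hPlow hPint.integrableOn
          rw [smul_eq_mul, mul_comm] at h
          exact h
      _ ≤ ∫ ξ in U N, P ξ ∂μ :=
          setIntegral_mono_set hPint.integrableOn (ae_of_all _ hPnn)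
            (HasSubset.Subset.eventuallyLE hcapU)
  -- final numeric computation
  have hIin : (0:ℝ) ≤ ∫ ξ in U N, P ξ ∂μ := by
    have : (0:ℝ) ≤ (δ/(3*δ)^(d+1)) * ((2:ℝ)^n' * (δ/8)^(d+1)) := by positivity
    linarith [step34]
  have hinv : (C₁ * 2^(N*d) * ((2:ℝ)^(n'+1) * (2*δ)^(d+1)))⁻¹ ≤ (m N)⁻¹ :=
    inv_anti₀ (hm0 N) (hmub N)
  have chain : (((n'+1 : ℕ)) : ℝ)⁻¹ * ((C₁ * 2^(N*d) * ((2:ℝ)^(n'+1) * (2*δ)^(d+1)))⁻¹ *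
      ((δ/(3*δ)^(d+1)) * ((2:ℝ)^n' * (δ/8)^(d+1)))) ≤ ∫ ξ, P ξ * f ξ ∂μ := by
    calc (((n'+1 : ℕ)) : ℝ)⁻¹ * ((C₁ * 2^(N*d) * ((2:ℝ)^(n'+1) * (2*δ)^(d+1)))⁻¹ *
        ((δ/(3*δ)^(d+1)) * ((2:ℝ)^n' * (δ/8)^(d+1))))
        ≤ (((n'+1 : ℕ)) : ℝ)⁻¹ * ((m N)⁻¹ * ∫ ξ in U N, P ξ ∂μ) := by
          apply mul_le_mul_of_nonneg_left _ (by positivity)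
          apply mul_le_mul hinv step34 (by positivity) (inv_nonneg.2 (hm0 N).le)
      _ = ∫ ξ, P ξ * g ξ ∂μ := step2.symm
      _ ≤ ∫ ξ, P ξ * f ξ ∂μ := step1
  refine le_trans (le_of_eq ?_) chain
  -- arithmetic identity
  have hNcast : ((⌊(((n'+1 : ℕ)) : ℝ) / α⌋₊ : ℝ) + 1) = (N : ℝ) := by
    rw [hNdef]; push_cast; ring
  rw [hNcast]
  have hexp : (((n'+1 : ℕ) : ℝ) - (N:ℝ)) * (d:ℝ) = (((n'+1-N) * d : ℕ) : ℝ) := by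
    push_cast [Nat.cast_sub hNn]
    ring
  rw [hexp, Real.rpow_natCast]
  have hkey : (2:ℝ)^((n'+1-N)*d) * 2^(N*d) = ((2:ℝ)^(n'+1))^d := by
    rw [← pow_add, ← add_mul, Nat.sub_add_cancel hNn, pow_mul]
  have h2n1 : ((2:ℝ)^(n'+1)) ≠ 0 := by positivity
  have h2Nd : ((2:ℝ)^(N*d)) ≠ 0 := by positivity
  have hn1 : (((n'+1 : ℕ)) : ℝ) ≠ 0 := by positivity
  rw [hδeq]
  have hE2 : (2:ℝ)^((n'+1-N)*d) = ((2:ℝ)^(n'+1))^d / 2^(N*d) := (eq_div_iff h2Nd).2 hkey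
  rw [hE2]
  have h48 : ((48:ℝ))^(d+1) ≠ 0 := by positivity
  have h3 : ((3:ℝ))^(d+1) ≠ 0 := by positivity
  have h8 : ((8:ℝ))^(d+1) ≠ 0 := by positivity
  have hTd : (((2:ℝ)^(n'+1))^d) ≠ 0 := by positivity
  have hTd1 : (((2:ℝ)^(n'+1))^(d+1)) ≠ 0 := by positivity
  have hA : ((2:ℝ)^(n'+1)) = 2 * 2^n' := by rw [pow_succ']
  have h48e : ((48:ℝ))^(d+1) = 3^(d+1) * 16^(d+1) := by rw [← mul_pow]; norm_num
  rw [hA, h48e]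
  have h2 : ((2:ℝ)^n') ≠ 0 := by positivity
  simp only [div_eq_mul_inv, mul_pow, inv_pow, mul_inv, inv_inv]
  field_simp
  rw [show (16:ℝ)^(d+1) = 2^(d+1)*8^(d+1) by rw [← mul_pow]; norm_num]
  ring
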